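/- Let (t_i)_{i≥1} be the real sequence defined by t_1 = 1/4 and t_i = 1/(4 − 4·t_{i−1}) − 1/4 for i ≥ 2. Then t_i = 3/(2·(4^i + 2)) for every i ≥ 1. -/
import Mathlib


/-- if `t_1 = 1/4` and `t_i = 1/(4 − 4·t_{i−1}) − 1/4` for `i ≥ 2`, then
`t_i = 3/(2·(4^i + 2))` for every `i ≥ 1`. -/
theorem stmt_9 (t : ℕ → ℝ) (ht1 : t 1 = 1 / 4)
    (htrec : ∀ i : ℕ, 2 ≤ i → t i = 1 / (4 - 4 * t (i - 1)) - 1 / 4) :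
    ∀ i : ℕ, 1 ≤ i → t i = 3 / (2 * (4 ^ i + 2)) := by
  intro i hi
  induction i with
  | zero => omega
  | succ n ih =>
    rcases Nat.eq_or_lt_of_le hi with h | h
    · rw [← h]; rw [ht1]; norm_num
    · have hn : 1 ≤ n := by omega
      have hrec := htrec (n + 1) (by omega)
      simp only [Nat.add_sub_cancel] at hrec
      rw [hrec, ih hn]
      have hp : (0:ℝ) < (4:ℝ) ^ n := by positivity
      have h1 : (2:ℝ) * ((4:ℝ) ^ n + 2) ≠ 0 := by positivity
      have hx : (3:ℝ) / (2 * ((4:ℝ) ^ n + 2)) < 1 := by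
        rw [div_lt_one (by positivity)]; nlinarith
      have h2 : (4:ℝ) - 4 * (3 / (2 * ((4:ℝ) ^ n + 2))) ≠ 0 := by nlinarith
      have h3 : (2:ℝ) * ((4:ℝ) ^ (n+1) + 2) ≠ 0 := by positivity
      have h6 : (8:ℝ) * 4 ^ n + 4 ≠ 0 := by positivity
      have key : (4:ℝ) - 4 * (3 / (2 * ((4:ℝ) ^ n + 2))) =
          (8 * 4 ^ n + 4) / (2 * (4 ^ n + 2)) := by
        field_simp; ring
      rw [key, one_div_div, div_sub_div _ _ h6 (by norm_num : (4:ℝ) ≠ 0),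
        div_eq_div_iff (by positivity) h3]
      ring_nf
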